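/- Let τ² = σ²_WI + (Σ_{i=1}^K n_i² / N)·σ²_AI, C = U − L, and n = max{n_1,…,n_K}. Then for any ε > 0, Prob{ u − û_{S_N} ≥ ε } ≤ exp( −N ε² / (2τ² + (2/3)·n·C·ε) ). -/

import Mathlib

open MeasureTheory

/-- The sampling measure: `K` training instances drawn i.i.d. from `D` and
`N` random seeds drawn i.i.d. from `G`, independently of the instances. -/
noncomputable def sampleMeasure {Z V : Type*} [MeasurableSpace Z] [MeasurableSpace V]
    (D : Measure Z) (G : Measure V) (K N : ℕ) :
    Measure ((Fin K → Z) × (Fin N → V)) :=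
  (Measure.pi fun _ : Fin K => D).prod (Measure.pi fun _ : Fin N => G)

/-- True performance `u = E_{z∼D, v∼G}[f(z,v)]`. -/
noncomputable def truePerf {Z V : Type*} [MeasurableSpace Z] [MeasurableSpace V]
    (D : Measure Z) (G : Measure V) (f : Z × V → ℝ) : ℝ :=
  ∫ zv, f zv ∂(D.prod G)

/-- Within-instance mean `u_z = E_{v∼G}[f(z,v)]`. -/
noncomputable def instPerf {Z V : Type*} [MeasurableSpace V]
    (G : Measure V) (f : Z × V → ℝ) (z : Z) : ℝ :=
  ∫ v, f (z, v) ∂G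

/-- Expected within-instance variance `σ²_WI = E_{z∼D}[E_{v∼G}[(f(z,v) − u_z)²]]`. -/
noncomputable def sigma2WI {Z V : Type*} [MeasurableSpace Z] [MeasurableSpace V]
    (D : Measure Z) (G : Measure V) (f : Z × V → ℝ) : ℝ :=
  ∫ z, (∫ v, (f (z, v) - instPerf G f z) ^ 2 ∂G) ∂D

/-- Across-instance variance `σ²_AI = E_{z∼D}[(u_z − u)²]`. -/
noncomputable def sigma2AI {Z V : Type*} [MeasurableSpace Z] [MeasurableSpace V]
    (D : Measure Z) (G : Measure V) (f : Z × V → ℝ) : ℝ :=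
  ∫ z, (instPerf G f z - truePerf D G f) ^ 2 ∂D

/-- The number `n_i` of runs performed on the `i`-th training instance, for an
assignment `a : Fin N → Fin K` of each of the `N` runs to a training instance. -/
def nCount {K N : ℕ} (a : Fin N → Fin K) (i : Fin K) : ℕ :=
  (Finset.univ.filter fun t => a t = i).card


section AnalysisAux
open Real

/-- For `x ≤ 0`, `exp x ≤ 1 + x + x²/2`. -/
lemma exp_le_neg_side {x : ℝ} (hx : x ≤ 0) : Real.exp x ≤ 1 + x + x ^ 2 / 2 := by
  have key : Antitone (fun x : ℝ => 1 + x + x ^ 2 / 2 - Real.exp x) := by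
    have hd : ∀ x : ℝ, HasDerivAt (fun x : ℝ => 1 + x + x ^ 2 / 2 - Real.exp x)
        (1 + x - Real.exp x) x := by
      intro x
      have h1 : HasDerivAt (fun x : ℝ => 1 + x + x ^ 2 / 2) (1 + x) x := by
        have := (((hasDerivAt_id x).const_add 1).add
          (((hasDerivAt_pow 2 x)).div_const 2))
        simp at this; exact this
      have := h1.sub (Real.hasDerivAt_exp x)
      exact this
    refine antitone_of_deriv_nonpos (fun x => (hd x).differentiableAt) (fun x => ?_)
    rw [(hd x).deriv]
    have := Real.add_one_le_exp x
    linarith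
  have h0 := key hx
  simp only [Real.exp_zero] at h0
  nlinarith [h0]

/-- `x + 2 + (x-2) eˣ ≥ 0` for `x ≥ 0`. -/
lemma aux_G {x : ℝ} (hx : 0 ≤ x) : 0 ≤ x + 2 + (x - 2) * Real.exp x := by
  have key : Monotone (fun x : ℝ => x + 2 + (x - 2) * Real.exp x) := by
    have hd : ∀ x : ℝ, HasDerivAt (fun x : ℝ => x + 2 + (x - 2) * Real.exp x)
        (1 + (x - 1) * Real.exp x) x := by
      intro x
      have h1 : HasDerivAt (fun x : ℝ => x + 2) 1 x := by
        simpa using (hasDerivAt_id x).add_const 2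
      have h2 : HasDerivAt (fun x : ℝ => (x - 2) * Real.exp x)
          (1 * Real.exp x + (x - 2) * Real.exp x) x :=
        ((hasDerivAt_id x).sub_const 2).mul (Real.hasDerivAt_exp x)
      have := h1.add h2
      refine this.congr_deriv ?_
      ring
    refine monotone_of_deriv_nonneg (fun x => (hd x).differentiableAt) (fun x => ?_)
    rw [(hd x).deriv]
    have h3 : (1 - x) * Real.exp x ≤ 1 := by
      have h4 : 1 - x ≤ Real.exp (-x) := by
        have := Real.add_one_le_exp (-x); linarith
      calc (1 - x) * Real.exp x ≤ Real.exp (-x) * Real.exp x := by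
            exact mul_le_mul_of_nonneg_right h4 (Real.exp_pos x).le
        _ = 1 := by rw [← Real.exp_add]; simp
    nlinarith
  have h0 := key hx
  simp only [Real.exp_zero] at h0
  nlinarith [h0]

/-- Core: for `x ≥ 0`, `2(1 - x/3)(eˣ - 1 - x) ≤ x²`. -/
lemma core_ineq {x : ℝ} (hx : 0 ≤ x) :
    2 * (1 - x / 3) * (Real.exp x - 1 - x) ≤ x ^ 2 := by
  set H : ℝ → ℝ := fun x => x ^ 2 - 2 * (1 - x / 3) * (Real.exp x - 1 - x) with hH
  have hd : ∀ x : ℝ, HasDerivAt H ((2/3) * (x + 2 + (x - 2) * Real.exp x)) x := by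
    intro x
    have h1 : HasDerivAt (fun x : ℝ => x ^ 2) (2 * x) x := by
      simpa using hasDerivAt_pow 2 x
    have h2 : HasDerivAt (fun x : ℝ => 2 * (1 - x / 3)) (-(2/3)) x := by
      have := (((hasDerivAt_id x).div_const 3).const_sub 1).const_mul 2
      refine this.congr_deriv ?_; ring
    have h3 : HasDerivAt (fun x : ℝ => Real.exp x - 1 - x) (Real.exp x - 1) x := by
      have := ((Real.hasDerivAt_exp x).sub_const 1).sub (hasDerivAt_id x)
      exact this
    have := h1.sub (h2.mul h3)
    refine this.congr_deriv ?_
    ring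
  have hmono : MonotoneOn H (Set.Ici (0:ℝ)) := by
    refine monotoneOn_of_deriv_nonneg (convex_Ici 0)
      (fun x _ => ((hd x).differentiableAt.continuousAt.continuousWithinAt))
      (fun x _ => (hd x).differentiableAt.differentiableWithinAt) (fun x hx => ?_)
    rw [(hd x).deriv]
    have : (0:ℝ) ≤ x := le_of_lt (by simpa using hx)
    have := aux_G this
    linarith
  have h0 : H 0 ≤ H x := hmono (Set.mem_Ici.mpr le_rfl) (Set.mem_Ici.mpr hx) hx
  have : H 0 = 0 := by simp [hH]
  rw [this] at h0
  simp only [hH] at h0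
  linarith

/-- Pointwise Bernstein-type bound: for `x ≤ c`, `0 ≤ c < 3`,
`exp x ≤ 1 + x + x²/(2(1-c/3))`. -/
lemma exp_le_quad {x c : ℝ} (hxc : x ≤ c) (hc0 : 0 ≤ c) (hc3 : c < 3) :
    Real.exp x ≤ 1 + x + x ^ 2 / (2 * (1 - c / 3)) := by
  have hd : 0 < 2 * (1 - c / 3) := by linarith
  rcases le_or_gt x 0 with hx | hx
  · have h1 := exp_le_neg_side hx
    have h2 : x ^ 2 / 2 ≤ x ^ 2 / (2 * (1 - c / 3)) := by
      apply div_le_div_of_nonneg_left (sq_nonneg x) hd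
      linarith
    linarith
  · have hx0 : 0 ≤ x := hx.le
    have h1 := core_ineq hx0
    have hdx : 0 < 2 * (1 - x / 3) := by linarith
    have h2 : Real.exp x - 1 - x ≤ x ^ 2 / (2 * (1 - x / 3)) := by
      rw [le_div_iff₀ hdx]; linarith
    have h3 : x ^ 2 / (2 * (1 - x / 3)) ≤ x ^ 2 / (2 * (1 - c / 3)) := by
      apply div_le_div_of_nonneg_left (sq_nonneg x) hd
      linarith
    linarith

/-- Abstract single-variable Bernstein MGF bound. -/
lemma mgf_bound {α : Type*} [MeasurableSpace α] (μ : Measure α) [IsProbabilityMeasure μ]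
    (Y : α → ℝ) (hY : Measurable Y) {b : ℝ} (hb0 : 0 ≤ b) (hYb : ∀ ω, |Y ω| ≤ b)
    (hEY : ∫ ω, Y ω ∂μ = 0) {s : ℝ} (hs : 0 ≤ s) (hsb : s * b < 3) :
    ∫ ω, Real.exp (s * Y ω) ∂μ
      ≤ Real.exp (s ^ 2 * (∫ ω, (Y ω) ^ 2 ∂μ) / (2 * (1 - s * b / 3))) := by
  have hintY : Integrable Y μ :=
    ⟨hY.aestronglyMeasurable, (hasFiniteIntegral_const b).mono (.of_forall fun ω => by
      simpa using (hYb ω).trans (le_abs_self b))⟩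
  have hintY2 : Integrable (fun ω => (Y ω) ^ 2) μ :=
    ⟨(hY.pow_const 2).aestronglyMeasurable,
      (hasFiniteIntegral_const (b ^ 2)).mono (.of_forall fun ω => by
        simp only [norm_pow, Real.norm_eq_abs, sq_abs]
        nlinarith [hYb ω, abs_nonneg (Y ω), sq_abs (Y ω)])⟩
  have hintE : Integrable (fun ω => Real.exp (s * Y ω)) μ :=
    ⟨((hY.const_mul s).exp).aestronglyMeasurable,
      (hasFiniteIntegral_const (Real.exp (s * b))).mono (.of_forall fun ω => by
        simp only [Real.norm_eq_abs, Real.abs_exp]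
        have : s * Y ω ≤ s * b :=
          mul_le_mul_of_nonneg_left ((le_abs_self _).trans (hYb ω)) hs
        exact Real.exp_le_exp.mpr this)⟩
  have hpt : ∀ ω, Real.exp (s * Y ω) ≤
      1 + s * Y ω + (s * Y ω) ^ 2 / (2 * (1 - s * b / 3)) := by
    intro ω
    refine exp_le_quad ?_ (mul_nonneg hs hb0) hsb
    exact mul_le_mul_of_nonneg_left ((le_abs_self _).trans (hYb ω)) hs
  have hint_rhs : Integrable
      (fun ω => 1 + s * Y ω + (s * Y ω) ^ 2 / (2 * (1 - s * b / 3))) μ := by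
    apply Integrable.add
    · exact (integrable_const 1).add (hintY.const_mul s)
    · have : (fun ω => (s * Y ω) ^ 2 / (2 * (1 - s * b / 3)))
          = fun ω => (s ^ 2 / (2 * (1 - s * b / 3))) * (Y ω) ^ 2 := by
        funext ω; ring
      rw [this]
      exact hintY2.const_mul _
  calc ∫ ω, Real.exp (s * Y ω) ∂μ
      ≤ ∫ ω, (1 + s * Y ω + (s * Y ω) ^ 2 / (2 * (1 - s * b / 3))) ∂μ :=
        integral_mono hintE hint_rhs hpt
    _ = 1 + s ^ 2 * (∫ ω, (Y ω) ^ 2 ∂μ) / (2 * (1 - s * b / 3)) := by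
        have h1 : (fun ω => 1 + s * Y ω + (s * Y ω) ^ 2 / (2 * (1 - s * b / 3)))
            = fun ω => (1 + s * Y ω) + (s ^ 2 / (2 * (1 - s * b / 3))) * (Y ω) ^ 2 := by
          funext ω; ring
        rw [h1]
        have h2 : Integrable (fun ω => 1 + s * Y ω) μ :=
          (integrable_const 1).add (hintY.const_mul s)
        rw [show (fun ω => 1 + s * Y ω + s ^ 2 / (2 * (1 - s * b / 3)) * Y ω ^ 2)
            = (fun ω => (1 + s * Y ω) + s ^ 2 / (2 * (1 - s * b / 3)) * Y ω ^ 2) from rfl,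
          integral_add h2 (hintY2.const_mul _),
          integral_add (integrable_const 1) (hintY.const_mul s),
          integral_const_mul, integral_const_mul, hEY]
        simp [measure_univ]
        ring
    _ ≤ Real.exp (s ^ 2 * (∫ ω, (Y ω) ^ 2 ∂μ) / (2 * (1 - s * b / 3))) := by
        have := Real.add_one_le_exp (s ^ 2 * (∫ ω, (Y ω) ^ 2 ∂μ) / (2 * (1 - s * b / 3)))
        linarith

end AnalysisAux

/-- Fubini for an i.i.d. pi measure. -/
lemma integral_pi_prod {ι E : Type*} [Fintype ι] [MeasurableSpace E]
    (μ : Measure E) [SigmaFinite μ] (g : ι → E → ℝ) :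
    ∫ x : ι → E, ∏ i, g i (x i) ∂(Measure.pi fun _ => μ) = ∏ i, ∫ x, g i x ∂μ := by
  letI : MeasureSpace E := ⟨μ⟩
  exact MeasureTheory.integral_fintype_prod_eq_prod g

/-- Marginal of a single coordinate. -/
lemma integral_pi_eval {ι E : Type*} [Fintype ι] [DecidableEq ι] [MeasurableSpace E]
    (μ : Measure E) [IsProbabilityMeasure μ] (g : E → ℝ) (j : ι) :
    ∫ x : ι → E, g (x j) ∂(Measure.pi fun _ => μ) = ∫ x, g x ∂μ := by
  have h := integral_pi_prod μ (fun t x => if t = j then g x else 1)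
  have h1 : ∀ x : ι → E, (∏ t, if t = j then g (x t) else 1) = g (x j) := by
    intro x
    rw [Finset.prod_ite_eq' Finset.univ j (fun t => g (x t))]
    simp
  have h2 : (∏ t : ι, ∫ x, (if t = j then g x else 1) ∂μ) = ∫ x, g x ∂μ := by
    have : ∀ t : ι, (∫ x, (if t = j then g x else 1) ∂μ)
        = if t = j then ∫ x, g x ∂μ else 1 := by
      intro t
      split_ifs with ht
      · rfl
      · simp [measure_univ]
    rw [Finset.prod_congr rfl (fun t _ => this t),
      Finset.prod_ite_eq' Finset.univ j (fun _ => ∫ x, g x ∂μ)]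
    simp
  rw [← h2, ← h]
  congr 1
  funext x
  exact (h1 x).symm

/-- Two distinct coordinates are independent. -/
lemma integral_pi_pair {ι E : Type*} [Fintype ι] [DecidableEq ι] [MeasurableSpace E]
    (μ : Measure E) [IsProbabilityMeasure μ] (g : E → ℝ) {j k : ι} (hjk : j ≠ k) :
    ∫ x : ι → E, g (x j) * g (x k) ∂(Measure.pi fun _ => μ)
      = (∫ x, g x ∂μ) * (∫ x, g x ∂μ) := by
  classical
  set F : ι → E → ℝ := fun t x => if t = j ∨ t = k then g x else 1 with hF
  have h := integral_pi_prod μ F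
  have hsub : ({j, k} : Finset ι) ⊆ Finset.univ := Finset.subset_univ _
  have h1 : ∀ x : ι → E, (∏ t, F t (x t)) = g (x j) * g (x k) := by
    intro x
    rw [← Finset.prod_subset hsub (fun t _ ht => by
      simp only [hF, Finset.mem_insert, Finset.mem_singleton] at ht ⊢
      rw [if_neg (by tauto)]),
      Finset.prod_pair hjk]
    simp [hF]
  have h2 : (∏ t : ι, ∫ x, F t x ∂μ) = (∫ x, g x ∂μ) * (∫ x, g x ∂μ) := by
    rw [← Finset.prod_subset hsub (fun t _ ht => by
      simp only [Finset.mem_insert, Finset.mem_singleton] at ht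
      have : (fun x => F t x) = fun _ => (1:ℝ) := by
        funext x; simp only [hF]; rw [if_neg (by tauto)]
      rw [this]; simp [measure_univ]),
      Finset.prod_pair hjk]
    have hj : (fun x => F j x) = g := by funext x; simp [hF]
    have hk : (fun x => F k x) = g := by funext x; simp [hF]
    rw [hj, hk]
  calc ∫ x : ι → E, g (x j) * g (x k) ∂(Measure.pi fun _ => μ)
      = ∫ x : ι → E, ∏ t, F t (x t) ∂(Measure.pi fun _ => μ) := by
        congr 1; funext x; exact (h1 x).symm
    _ = ∏ t : ι, ∫ x, F t x ∂μ := h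
    _ = (∫ x, g x ∂μ) * (∫ x, g x ∂μ) := h2

/-- Bounded measurable functions are integrable on finite measures. -/
lemma integrable_of_bdd {α : Type*} [MeasurableSpace α] {μ : Measure α} [IsFiniteMeasure μ]
    {g : α → ℝ} (hm : AEStronglyMeasurable g μ) {c : ℝ} (hc : ∀ ω, |g ω| ≤ c) :
    Integrable g μ :=
  ⟨hm, (hasFiniteIntegral_const c).mono (Filter.Eventually.of_forall fun ω => by
    simp only [Real.norm_eq_abs]
    exact (hc ω).trans (le_abs_self c))⟩

/-- The integral of a function with values in `[L,U]` over a probability measure is in `[L,U]`. -/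
lemma integral_mem_Icc {α : Type*} [MeasurableSpace α] (μ : Measure α) [IsProbabilityMeasure μ]
    {g : α → ℝ} (hint : Integrable g μ) {L U : ℝ} (h : ∀ ω, g ω ∈ Set.Icc L U) :
    (∫ ω, g ω ∂μ) ∈ Set.Icc L U := by
  constructor
  · calc L = ∫ _, L ∂μ := by simp [measure_univ]
      _ ≤ ∫ ω, g ω ∂μ := integral_mono (integrable_const L) hint (fun ω => (h ω).1)
  · calc (∫ ω, g ω ∂μ) ≤ ∫ _, U ∂μ :=
        integral_mono hint (integrable_const U) (fun ω => (h ω).2)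
      _ = U := by simp [measure_univ]

/-- Auxiliary: within-instance second moment `E_v[f(z,v)²]`. -/
noncomputable def instSq {Z V : Type*} [MeasurableSpace V]
    (G : Measure V) (f : Z × V → ℝ) (z : Z) : ℝ :=
  ∫ v, f (z, v) ^ 2 ∂G

section Setting
variable {Z V : Type*} [MeasurableSpace Z] [MeasurableSpace V]
  (D : Measure Z) (G : Measure V) [IsProbabilityMeasure D] [IsProbabilityMeasure G]
  {L U : ℝ} {f : Z × V → ℝ}

lemma abs_le_of_Icc {x : ℝ} (h : x ∈ Set.Icc L U) : |x| ≤ max |L| |U| := by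
  rw [abs_le]
  constructor
  · calc -(max |L| |U|) ≤ -|L| := by simp
      _ ≤ L := neg_abs_le L
      _ ≤ x := h.1
  · exact h.2.trans ((le_abs_self U).trans (le_max_right _ _))

variable (hf : Measurable f) (hbdd : ∀ z v, f (z, v) ∈ Set.Icc L U)
include hf hbdd

omit hbdd in
lemma meas_instPerf : Measurable (instPerf G f) :=
  (hf.stronglyMeasurable.integral_prod_right').measurable

omit hbdd in
lemma meas_instSq : Measurable (instSq G f) :=
  ((hf.pow_const 2).stronglyMeasurable.integral_prod_right').measurable

lemma integrable_slice (z : Z) : Integrable (fun v => f (z, v)) G :=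
  integrable_of_bdd (hf.comp measurable_prodMk_left).aestronglyMeasurable
    (fun v => abs_le_of_Icc (hbdd z v))

lemma instPerf_mem (z : Z) : instPerf G f z ∈ Set.Icc L U :=
  integral_mem_Icc G (integrable_slice G hf hbdd z) (fun v => hbdd z v)

lemma truePerf_eq : truePerf D G f = ∫ z, instPerf G f z ∂D := by
  rw [truePerf, integral_prod _ (integrable_of_bdd hf.aestronglyMeasurable
    (fun zv => abs_le_of_Icc (hbdd zv.1 zv.2)))]
  rfl

lemma integrable_instPerf : Integrable (instPerf G f) D :=
  integrable_of_bdd (meas_instPerf G hf).aestronglyMeasurable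
    (fun z => abs_le_of_Icc (instPerf_mem G hf hbdd z))

lemma truePerf_mem : truePerf D G f ∈ Set.Icc L U := by
  rw [truePerf_eq D G hf hbdd]
  exact integral_mem_Icc D (integrable_instPerf D G hf hbdd)
    (fun z => instPerf_mem G hf hbdd z)

lemma integrable_instSq : Integrable (instSq G f) D :=
  integrable_of_bdd (meas_instSq G hf).aestronglyMeasurable
    (c := max |L| |U| ^ 2) (fun z => by
      rw [instSq]
      have : ∀ v, f (z, v) ^ 2 ∈ Set.Icc (0:ℝ) (max |L| |U| ^ 2) := by
        intro v
        constructor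
        · positivity
        · have := abs_le_of_Icc (hbdd z v)
          nlinarith [abs_nonneg (f (z,v)), sq_abs (f (z,v))]
      have hint : Integrable (fun v => f (z, v) ^ 2) G := integrable_of_bdd
        ((hf.comp measurable_prodMk_left).pow_const 2).aestronglyMeasurable
        (c := max |L| |U| ^ 2) (fun v => by
          rw [abs_of_nonneg (by positivity)]; exact (this v).2)
      have hmem := integral_mem_Icc G hint this
      rw [abs_of_nonneg hmem.1]
      exact hmem.2)

lemma integrable_instPerf_sq : Integrable (fun z => instPerf G f z ^ 2) D :=
  integrable_of_bdd ((meas_instPerf G hf).pow_const 2).aestronglyMeasurable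
    (c := max |L| |U| ^ 2) (fun z => by
      have := abs_le_of_Icc (instPerf_mem G hf hbdd z)
      rw [abs_of_nonneg (sq_nonneg _)]
      nlinarith [abs_nonneg (instPerf G f z), sq_abs (instPerf G f z)])

lemma sigma2WI_eq : sigma2WI D G f = ∫ z, instSq G f z ∂D - ∫ z, instPerf G f z ^ 2 ∂D := by
  rw [sigma2WI, ← integral_sub (integrable_instSq D G hf hbdd)
    (integrable_instPerf_sq D G hf hbdd)]
  congr 1
  funext z
  have h1 : ∀ v, (f (z, v) - instPerf G f z) ^ 2
      = f (z, v) ^ 2 - (2 * instPerf G f z) * f (z, v) + instPerf G f z ^ 2 := by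
    intro v; ring
  rw [show (fun v => (f (z,v) - instPerf G f z) ^ 2) = fun v =>
      f (z, v) ^ 2 - (2 * instPerf G f z) * f (z, v) + instPerf G f z ^ 2 from funext h1]
  have hi1 : Integrable (fun v => f (z, v) ^ 2) G :=
    integrable_of_bdd ((hf.comp measurable_prodMk_left).pow_const 2).aestronglyMeasurable
      (c := max |L| |U| ^ 2) (fun v => by
        rw [abs_of_nonneg (by positivity)]
        have := abs_le_of_Icc (hbdd z v)
        nlinarith [abs_nonneg (f (z,v)), sq_abs (f (z,v))])
  have hi2 : Integrable (fun v => (2 * instPerf G f z) * f (z, v)) G :=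
    (integrable_slice G hf hbdd z).const_mul _
  have hi12 : Integrable (fun v => f (z, v) ^ 2 - (2 * instPerf G f z) * f (z, v)) G :=
    hi1.sub hi2
  rw [show (fun v => f (z, v) ^ 2 - (2 * instPerf G f z) * f (z, v) + instPerf G f z ^ 2)
      = fun v => (f (z, v) ^ 2 - (2 * instPerf G f z) * f (z, v)) + instPerf G f z ^ 2
      from rfl,
    integral_add hi12 (integrable_const _), integral_sub hi1 hi2, integral_const_mul]
  simp only [integral_const, measure_univ, probReal_univ, smul_eq_mul, one_mul]
  rw [instSq, instPerf]
  ring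

lemma sigma2AI_eq :
    sigma2AI D G f = ∫ z, instPerf G f z ^ 2 ∂D - truePerf D G f ^ 2 := by
  rw [sigma2AI]
  have h1 : ∀ z, (instPerf G f z - truePerf D G f) ^ 2
      = instPerf G f z ^ 2 - (2 * truePerf D G f) * instPerf G f z + truePerf D G f ^ 2 := by
    intro z; ring
  rw [show (fun z => (instPerf G f z - truePerf D G f) ^ 2) = fun z =>
      instPerf G f z ^ 2 - (2 * truePerf D G f) * instPerf G f z + truePerf D G f ^ 2
      from funext h1]
  have hi1 := integrable_instPerf_sq D G hf hbdd
  have hi2 : Integrable (fun z => (2 * truePerf D G f) * instPerf G f z) D :=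
    (integrable_instPerf D G hf hbdd).const_mul _
  have hi12 : Integrable
      (fun z => instPerf G f z ^ 2 - (2 * truePerf D G f) * instPerf G f z) D := hi1.sub hi2
  rw [show (fun z => instPerf G f z ^ 2 - (2 * truePerf D G f) * instPerf G f z
        + truePerf D G f ^ 2)
      = fun z => (instPerf G f z ^ 2 - (2 * truePerf D G f) * instPerf G f z)
        + truePerf D G f ^ 2 from rfl,
    integral_add hi12 (integrable_const _), integral_sub hi1 hi2,
    integral_const_mul, ← truePerf_eq D G hf hbdd]
  simp only [integral_const, measure_univ, probReal_univ, smul_eq_mul, one_mul]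
  ring

omit hbdd in
lemma meas_coord {m : ℕ} (j : Fin m) :
    Measurable fun ω : Z × (Fin m → V) => f (ω.1, ω.2 j) :=
  hf.comp (measurable_fst.prodMk ((measurable_pi_apply j).comp measurable_snd))

lemma integral_sum_eq (m : ℕ) :
    ∫ ω : Z × (Fin m → V), (∑ j, f (ω.1, ω.2 j))
        ∂(D.prod (Measure.pi fun _ : Fin m => G))
      = m * truePerf D G f := by
  set M := max |L| |U| with hM
  have habs : ∀ z v, |f (z, v)| ≤ M := fun z v => abs_le_of_Icc (hbdd z v)
  have hint : Integrable (fun ω : Z × (Fin m → V) => ∑ j, f (ω.1, ω.2 j))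
      (D.prod (Measure.pi fun _ : Fin m => G)) := by
    refine integrable_of_bdd (Finset.aestronglyMeasurable_fun_sum _ fun j _ =>
      (meas_coord hf j).aestronglyMeasurable) (c := m * M) (fun ω => ?_)
    calc |∑ j, f (ω.1, ω.2 j)| ≤ ∑ j, |f (ω.1, ω.2 j)| := Finset.abs_sum_le_sum_abs _ _
      _ ≤ ∑ _j : Fin m, M := Finset.sum_le_sum fun j _ => habs _ _
      _ = m * M := by simp [mul_comm]
  rw [integral_prod _ hint]
  have hinner : ∀ z, (∫ w : Fin m → V, (∑ j, f (z, w j)) ∂(Measure.pi fun _ => G))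
      = m * instPerf G f z := by
    intro z
    have hco : ∀ j : Fin m, Integrable (fun w : Fin m → V => f (z, w j))
        (Measure.pi fun _ : Fin m => G) := fun j => integrable_of_bdd
      ((hf.comp (measurable_const.prodMk (measurable_pi_apply j))).aestronglyMeasurable)
      (c := M) (fun w => habs _ _)
    rw [integral_finset_sum _ (fun j _ => hco j)]
    rw [Finset.sum_congr rfl (fun j _ => integral_pi_eval G (fun v => f (z, v)) j)]
    simp [instPerf, mul_comm]
  calc ∫ z, (∫ w : Fin m → V, (∑ j, f (z, w j)) ∂(Measure.pi fun _ => G)) ∂D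
      = ∫ z, m * instPerf G f z ∂D := by
        exact integral_congr_ae (Filter.Eventually.of_forall hinner)
    _ = m * truePerf D G f := by
        rw [integral_const_mul, ← truePerf_eq D G hf hbdd]

lemma integral_sum_sq_eq (m : ℕ) :
    ∫ ω : Z × (Fin m → V), (∑ j, f (ω.1, ω.2 j)) ^ 2
        ∂(D.prod (Measure.pi fun _ : Fin m => G))
      = m * (∫ z, instSq G f z ∂D)
        + ((m : ℝ) ^ 2 - m) * ∫ z, instPerf G f z ^ 2 ∂D := by
  set M := max |L| |U| with hM
  have habs : ∀ z v, |f (z, v)| ≤ M := fun z v => abs_le_of_Icc (hbdd z v)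
  have hM0 : 0 ≤ M := le_trans (abs_nonneg L) (le_max_left _ _)
  have hint : Integrable (fun ω : Z × (Fin m → V) => (∑ j, f (ω.1, ω.2 j)) ^ 2)
      (D.prod (Measure.pi fun _ : Fin m => G)) := by
    refine integrable_of_bdd ((Finset.measurable_sum _ fun j _ =>
      meas_coord hf j).pow_const 2).aestronglyMeasurable
      (c := (m * M) ^ 2) (fun ω => ?_)
    have h1 : |∑ j, f (ω.1, ω.2 j)| ≤ m * M := by
      calc |∑ j, f (ω.1, ω.2 j)| ≤ ∑ j, |f (ω.1, ω.2 j)| := Finset.abs_sum_le_sum_abs _ _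
        _ ≤ ∑ _j : Fin m, M := Finset.sum_le_sum fun j _ => habs _ _
        _ = m * M := by simp [mul_comm]
    rw [abs_of_nonneg (sq_nonneg _)]
    nlinarith [abs_nonneg (∑ j, f (ω.1, ω.2 j)), sq_abs (∑ j, f (ω.1, ω.2 j))]
  rw [integral_prod _ hint]
  have hinner : ∀ z, (∫ w : Fin m → V, (∑ j, f (z, w j)) ^ 2 ∂(Measure.pi fun _ => G))
      = m * instSq G f z + ((m : ℝ) ^ 2 - m) * instPerf G f z ^ 2 := by
    intro z
    have hexp : ∀ w : Fin m → V, (∑ j, f (z, w j)) ^ 2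
        = ∑ j, ∑ k, f (z, w j) * f (z, w k) := by
      intro w
      rw [sq, Finset.sum_mul_sum]
    rw [show (fun w : Fin m → V => (∑ j, f (z, w j)) ^ 2)
        = fun w => ∑ j, ∑ k, f (z, w j) * f (z, w k) from funext hexp]
    have hintjk : ∀ j k : Fin m, Integrable
        (fun w : Fin m → V => f (z, w j) * f (z, w k)) (Measure.pi fun _ => G) := by
      intro j k
      refine integrable_of_bdd (((hf.comp (measurable_const.prodMk
        (measurable_pi_apply j))).mul (hf.comp (measurable_const.prodMk
        (measurable_pi_apply k)))).aestronglyMeasurable) (c := M * M) (fun w => ?_)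
      rw [abs_mul]
      exact mul_le_mul (habs _ _) (habs _ _) (abs_nonneg _) hM0
    rw [integral_finset_sum _ (fun j _ => integrable_finset_sum _ (fun k _ => hintjk j k))]
    rw [Finset.sum_congr rfl (fun j _ => integral_finset_sum _ (fun k _ => hintjk j k))]
    have hterm : ∀ j k : Fin m,
        (∫ w : Fin m → V, f (z, w j) * f (z, w k) ∂(Measure.pi fun _ => G))
        = instPerf G f z * instPerf G f z
          + (if j = k then instSq G f z - instPerf G f z * instPerf G f z else 0) := by
      intro j k
      by_cases hjk : j = k
      · subst hjk
        rw [if_pos rfl]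
        have := integral_pi_eval (ι := Fin m) G (fun v => f (z, v) * f (z, v)) j
        rw [this]
        have : instSq G f z = ∫ v, f (z, v) * f (z, v) ∂G := by
          rw [instSq]; congr 1; funext v; ring
        rw [← this]; ring
      · rw [if_neg hjk, integral_pi_pair G (fun v => f (z, v)) hjk]
        rw [instPerf]; ring
    rw [Finset.sum_congr rfl (fun j _ => Finset.sum_congr rfl (fun k _ => hterm j k))]
    have hsum : ∀ j : Fin m, (∑ k : Fin m, (instPerf G f z * instPerf G f z
        + (if j = k then instSq G f z - instPerf G f z * instPerf G f z else 0)))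
        = m * (instPerf G f z * instPerf G f z)
          + (instSq G f z - instPerf G f z * instPerf G f z) := by
      intro j
      rw [Finset.sum_add_distrib, Finset.sum_const, Finset.sum_ite_eq]
      simp [mul_comm]
    rw [Finset.sum_congr rfl (fun j _ => hsum j), Finset.sum_const]
    simp only [Finset.card_univ, Fintype.card_fin, nsmul_eq_mul]
    ring
  calc ∫ z, (∫ w : Fin m → V, (∑ j, f (z, w j)) ^ 2 ∂(Measure.pi fun _ => G)) ∂D
      = ∫ z, (m * instSq G f z + ((m : ℝ) ^ 2 - m) * instPerf G f z ^ 2) ∂D :=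
        integral_congr_ae (Filter.Eventually.of_forall hinner)
    _ = m * (∫ z, instSq G f z ∂D) + ((m : ℝ) ^ 2 - m) * ∫ z, instPerf G f z ^ 2 ∂D := by
        rw [integral_add ((integrable_instSq D G hf hbdd).const_mul _)
          ((integrable_instPerf_sq D G hf hbdd).const_mul _),
          integral_const_mul, integral_const_mul]

lemma integrable_sum_m (m : ℕ) :
    Integrable (fun ω : Z × (Fin m → V) => ∑ j, f (ω.1, ω.2 j))
      (D.prod (Measure.pi fun _ : Fin m => G)) := by
  refine integrable_of_bdd (Finset.aestronglyMeasurable_fun_sum _ fun j _ =>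
    (meas_coord hf j).aestronglyMeasurable) (c := m * max |L| |U|) (fun ω => ?_)
  calc |∑ j, f (ω.1, ω.2 j)| ≤ ∑ j, |f (ω.1, ω.2 j)| := Finset.abs_sum_le_sum_abs _ _
    _ ≤ ∑ _j : Fin m, max |L| |U| :=
      Finset.sum_le_sum fun j _ => abs_le_of_Icc (hbdd _ _)
    _ = m * max |L| |U| := by simp [mul_comm]

lemma integrable_sum_sq_m (m : ℕ) :
    Integrable (fun ω : Z × (Fin m → V) => (∑ j, f (ω.1, ω.2 j)) ^ 2)
      (D.prod (Measure.pi fun _ : Fin m => G)) := by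
  refine integrable_of_bdd ((Finset.measurable_sum _ fun j _ =>
    meas_coord hf j).pow_const 2).aestronglyMeasurable
    (c := (m * max |L| |U|) ^ 2) (fun ω => ?_)
  have h1 : |∑ j, f (ω.1, ω.2 j)| ≤ m * max |L| |U| := by
    calc |∑ j, f (ω.1, ω.2 j)| ≤ ∑ j, |f (ω.1, ω.2 j)| := Finset.abs_sum_le_sum_abs _ _
      _ ≤ ∑ _j : Fin m, max |L| |U| :=
        Finset.sum_le_sum fun j _ => abs_le_of_Icc (hbdd _ _)
      _ = m * max |L| |U| := by simp [mul_comm]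
  rw [abs_of_nonneg (sq_nonneg _)]
  nlinarith [abs_nonneg (∑ j, f (ω.1, ω.2 j)), sq_abs (∑ j, f (ω.1, ω.2 j))]

lemma integral_Y_eq (m : ℕ) :
    ∫ ω : Z × (Fin m → V), ((m : ℝ) * truePerf D G f - ∑ j, f (ω.1, ω.2 j))
        ∂(D.prod (Measure.pi fun _ : Fin m => G)) = 0 := by
  rw [integral_sub (integrable_const _) (integrable_sum_m D G hf hbdd m),
    integral_sum_eq D G hf hbdd m]
  simp [measure_univ]

lemma integral_Y_sq_eq (m : ℕ) :
    ∫ ω : Z × (Fin m → V), ((m : ℝ) * truePerf D G f - ∑ j, f (ω.1, ω.2 j)) ^ 2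
        ∂(D.prod (Measure.pi fun _ : Fin m => G))
      = m * sigma2WI D G f + (m : ℝ) ^ 2 * sigma2AI D G f := by
  have hexp : (fun ω : Z × (Fin m → V) =>
      ((m : ℝ) * truePerf D G f - ∑ j, f (ω.1, ω.2 j)) ^ 2)
      = fun ω => ((∑ j, f (ω.1, ω.2 j)) ^ 2
          - (2 * ((m : ℝ) * truePerf D G f)) * ∑ j, f (ω.1, ω.2 j))
          + ((m : ℝ) * truePerf D G f) ^ 2 := by
    funext ω; ring
  have hi1 := integrable_sum_sq_m D G hf hbdd m
  have hi2 := (integrable_sum_m D G hf hbdd m).const_mul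
    (2 * ((m : ℝ) * truePerf D G f))
  have hi12 : Integrable (fun ω : Z × (Fin m → V) => (∑ j, f (ω.1, ω.2 j)) ^ 2
      - (2 * ((m : ℝ) * truePerf D G f)) * ∑ j, f (ω.1, ω.2 j))
      (D.prod (Measure.pi fun _ : Fin m => G)) := hi1.sub hi2
  rw [hexp, integral_add hi12 (integrable_const _), integral_sub hi1 hi2,
    integral_const_mul, integral_sum_sq_eq D G hf hbdd m, integral_sum_eq D G hf hbdd m,
    sigma2WI_eq D G hf hbdd, sigma2AI_eq D G hf hbdd]
  simp only [integral_const, measure_univ, probReal_univ, smul_eq_mul, one_mul]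
  ring

lemma integrable_Y_sq_m (m : ℕ) :
    Integrable (fun ω : Z × (Fin m → V) =>
      ((m : ℝ) * truePerf D G f - ∑ j, f (ω.1, ω.2 j)) ^ 2)
      (D.prod (Measure.pi fun _ : Fin m => G)) := by
  set M := max |L| |U| with hM
  have huM : |truePerf D G f| ≤ M := abs_le_of_Icc (truePerf_mem D G hf hbdd)
  refine integrable_of_bdd ((measurable_const.sub (Finset.measurable_sum _
    fun j _ => meas_coord hf j)).pow_const 2).aestronglyMeasurable
    (c := (2 * m * M) ^ 2) (fun ω => ?_)
  have h1 : |∑ j, f (ω.1, ω.2 j)| ≤ m * M := by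
    calc |∑ j, f (ω.1, ω.2 j)| ≤ ∑ j, |f (ω.1, ω.2 j)| := Finset.abs_sum_le_sum_abs _ _
      _ ≤ ∑ _j : Fin m, M := Finset.sum_le_sum fun j _ => abs_le_of_Icc (hbdd _ _)
      _ = m * M := by simp [mul_comm]
  have h2 : |(m : ℝ) * truePerf D G f| ≤ m * M := by
    rw [abs_mul, Nat.abs_cast]
    exact mul_le_mul_of_nonneg_left huM (Nat.cast_nonneg m)
  have h3 : |(m : ℝ) * truePerf D G f - ∑ j, f (ω.1, ω.2 j)| ≤ 2 * m * M := by
    calc |(m : ℝ) * truePerf D G f - ∑ j, f (ω.1, ω.2 j)|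
        ≤ |(m : ℝ) * truePerf D G f| + |∑ j, f (ω.1, ω.2 j)| := abs_sub _ _
      _ ≤ 2 * m * M := by linarith
  rw [abs_of_nonneg (sq_nonneg _)]
  nlinarith [abs_nonneg ((m : ℝ) * truePerf D G f - ∑ j, f (ω.1, ω.2 j)),
    sq_abs ((m : ℝ) * truePerf D G f - ∑ j, f (ω.1, ω.2 j))]

lemma phi_meas (s : ℝ) :
    Measurable fun z => ∫ v, Real.exp (-(s * f (z, v))) ∂G :=
  ((Real.measurable_exp.comp ((hf.const_mul s).neg)).stronglyMeasurable.integral_prod_right').measurable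

lemma phi_mem (s : ℝ) (z : Z) :
    (∫ v, Real.exp (-(s * f (z, v))) ∂G)
      ∈ Set.Icc (0 : ℝ) (Real.exp (|s| * max |L| |U|)) := by
  have hpt : ∀ v, Real.exp (-(s * f (z, v)))
      ∈ Set.Icc (0 : ℝ) (Real.exp (|s| * max |L| |U|)) := by
    intro v
    constructor
    · exact (Real.exp_pos _).le
    · apply Real.exp_le_exp.mpr
      calc -(s * f (z, v)) ≤ |s * f (z, v)| := neg_le_abs _
        _ = |s| * |f (z, v)| := abs_mul _ _
        _ ≤ |s| * max |L| |U| :=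
          mul_le_mul_of_nonneg_left (abs_le_of_Icc (hbdd z v)) (abs_nonneg s)
  have hm : Measurable fun v => Real.exp (-(s * f (z, v))) :=
    Real.measurable_exp.comp (((hf.comp measurable_prodMk_left).const_mul s).neg)
  refine integral_mem_Icc G (integrable_of_bdd hm.aestronglyMeasurable
    (c := Real.exp (|s| * max |L| |U|)) (fun v => ?_)) hpt
  rw [abs_of_nonneg (hpt v).1]
  exact (hpt v).2

lemma mgf_m (m : ℕ) (s : ℝ) :
    ∫ ω : Z × (Fin m → V),
        Real.exp (s * ((m : ℝ) * truePerf D G f - ∑ j, f (ω.1, ω.2 j)))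
        ∂(D.prod (Measure.pi fun _ : Fin m => G))
      = Real.exp (s * ((m : ℝ) * truePerf D G f))
        * ∫ z, (∫ v, Real.exp (-(s * f (z, v))) ∂G) ^ m ∂D := by
  set u := truePerf D G f with hu
  have hrw : ∀ ω : Z × (Fin m → V),
      Real.exp (s * ((m : ℝ) * u - ∑ j, f (ω.1, ω.2 j)))
      = Real.exp (s * ((m : ℝ) * u)) * ∏ j, Real.exp (-(s * f (ω.1, ω.2 j))) := by
    intro ω
    rw [← Real.exp_sum, ← Real.exp_add]
    congr 1
    have h1 : ∑ j, -(s * f (ω.1, ω.2 j)) = -(s * ∑ j, f (ω.1, ω.2 j)) := by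
      rw [Finset.mul_sum, ← Finset.sum_neg_distrib]
    rw [h1]; ring
  have hmeasP : Measurable fun ω : Z × (Fin m → V) =>
      ∏ j, Real.exp (-(s * f (ω.1, ω.2 j))) :=
    Finset.measurable_prod _ fun j _ =>
      Real.measurable_exp.comp ((meas_coord hf j).const_mul s).neg
  have hintP : Integrable (fun ω : Z × (Fin m → V) =>
      ∏ j, Real.exp (-(s * f (ω.1, ω.2 j))))
      (D.prod (Measure.pi fun _ : Fin m => G)) := by
    refine integrable_of_bdd hmeasP.aestronglyMeasurable
      (c := Real.exp (|s| * max |L| |U|) ^ m) (fun ω => ?_)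
    rw [abs_of_nonneg (Finset.prod_nonneg fun j _ => (Real.exp_pos _).le)]
    calc (∏ j, Real.exp (-(s * f (ω.1, ω.2 j))))
        ≤ ∏ _j : Fin m, Real.exp (|s| * max |L| |U|) := by
          refine Finset.prod_le_prod (fun j _ => (Real.exp_pos _).le) (fun j _ => ?_)
          apply Real.exp_le_exp.mpr
          calc -(s * f (ω.1, ω.2 j)) ≤ |s * f (ω.1, ω.2 j)| := neg_le_abs _
            _ = |s| * |f (ω.1, ω.2 j)| := abs_mul _ _
            _ ≤ |s| * max |L| |U| :=
              mul_le_mul_of_nonneg_left (abs_le_of_Icc (hbdd _ _)) (abs_nonneg s)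
      _ = Real.exp (|s| * max |L| |U|) ^ m := by
          rw [Finset.prod_const, Finset.card_univ, Fintype.card_fin]
  calc ∫ ω : Z × (Fin m → V),
        Real.exp (s * ((m : ℝ) * u - ∑ j, f (ω.1, ω.2 j)))
        ∂(D.prod (Measure.pi fun _ : Fin m => G))
      = ∫ ω : Z × (Fin m → V), Real.exp (s * ((m : ℝ) * u))
          * ∏ j, Real.exp (-(s * f (ω.1, ω.2 j)))
          ∂(D.prod (Measure.pi fun _ : Fin m => G)) :=
        integral_congr_ae (Filter.Eventually.of_forall hrw)
    _ = Real.exp (s * ((m : ℝ) * u)) * ∫ ω : Z × (Fin m → V),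
          ∏ j, Real.exp (-(s * f (ω.1, ω.2 j)))
          ∂(D.prod (Measure.pi fun _ : Fin m => G)) := integral_const_mul _ _
    _ = Real.exp (s * ((m : ℝ) * u))
        * ∫ z, (∫ v, Real.exp (-(s * f (z, v))) ∂G) ^ m ∂D := by
        rw [integral_prod _ hintP]
        congr 1
        refine integral_congr_ae (Filter.Eventually.of_forall fun z => ?_)
        show (∫ w : Fin m → V, ∏ j : Fin m, Real.exp (-(s * f (z, w j)))
            ∂(Measure.pi fun _ : Fin m => G))
          = (∫ v, Real.exp (-(s * f (z, v))) ∂G) ^ m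
        rw [integral_pi_prod G (fun (_ : Fin m) v => Real.exp (-(s * f (z, v))))]
        rw [Finset.prod_const, Finset.card_univ, Fintype.card_fin]

lemma mgf_total (K N : ℕ) (a : Fin N → Fin K) (s : ℝ) :
    ∫ ω : (Fin K → Z) × (Fin N → V),
        Real.exp (s * ((N : ℝ) * truePerf D G f - ∑ t, f (ω.1 (a t), ω.2 t)))
        ∂((Measure.pi fun _ : Fin K => D).prod (Measure.pi fun _ : Fin N => G))
      = Real.exp (s * ((N : ℝ) * truePerf D G f))
        * ∏ i : Fin K,
            ∫ z, (∫ v, Real.exp (-(s * f (z, v))) ∂G) ^ (nCount a i) ∂D := by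
  classical
  set u := truePerf D G f with hu
  set φ := fun z => ∫ v, Real.exp (-(s * f (z, v))) ∂G with hφ
  have hrw : ∀ ω : (Fin K → Z) × (Fin N → V),
      Real.exp (s * ((N : ℝ) * u - ∑ t, f (ω.1 (a t), ω.2 t)))
      = Real.exp (s * ((N : ℝ) * u)) * ∏ t, Real.exp (-(s * f (ω.1 (a t), ω.2 t))) := by
    intro ω
    rw [← Real.exp_sum, ← Real.exp_add]
    congr 1
    have h1 : ∑ t, -(s * f (ω.1 (a t), ω.2 t)) = -(s * ∑ t, f (ω.1 (a t), ω.2 t)) := by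
      rw [Finset.mul_sum, ← Finset.sum_neg_distrib]
    rw [h1]; ring
  have hmeasc : ∀ t : Fin N, Measurable fun ω : (Fin K → Z) × (Fin N → V) =>
      f (ω.1 (a t), ω.2 t) := fun t =>
    hf.comp (((measurable_pi_apply (a t)).comp measurable_fst).prodMk
      ((measurable_pi_apply t).comp measurable_snd))
  have hmeasP : Measurable fun ω : (Fin K → Z) × (Fin N → V) =>
      ∏ t, Real.exp (-(s * f (ω.1 (a t), ω.2 t))) :=
    Finset.measurable_prod _ fun t _ =>
      Real.measurable_exp.comp ((hmeasc t).const_mul s).neg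
  have hintP : Integrable (fun ω : (Fin K → Z) × (Fin N → V) =>
      ∏ t, Real.exp (-(s * f (ω.1 (a t), ω.2 t))))
      ((Measure.pi fun _ : Fin K => D).prod (Measure.pi fun _ : Fin N => G)) := by
    refine integrable_of_bdd hmeasP.aestronglyMeasurable
      (c := Real.exp (|s| * max |L| |U|) ^ N) (fun ω => ?_)
    rw [abs_of_nonneg (Finset.prod_nonneg fun t _ => (Real.exp_pos _).le)]
    calc (∏ t, Real.exp (-(s * f (ω.1 (a t), ω.2 t))))
        ≤ ∏ _t : Fin N, Real.exp (|s| * max |L| |U|) := by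
          refine Finset.prod_le_prod (fun t _ => (Real.exp_pos _).le) (fun t _ => ?_)
          apply Real.exp_le_exp.mpr
          calc -(s * f (ω.1 (a t), ω.2 t)) ≤ |s * f (ω.1 (a t), ω.2 t)| := neg_le_abs _
            _ = |s| * |f (ω.1 (a t), ω.2 t)| := abs_mul _ _
            _ ≤ |s| * max |L| |U| :=
              mul_le_mul_of_nonneg_left (abs_le_of_Icc (hbdd _ _)) (abs_nonneg s)
      _ = Real.exp (|s| * max |L| |U|) ^ N := by
          rw [Finset.prod_const, Finset.card_univ, Fintype.card_fin]
  have hgroup : ∀ zv : Fin K → Z, (∏ t, φ (zv (a t)))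
      = ∏ i : Fin K, φ (zv i) ^ (nCount a i) := by
    intro zv
    rw [← Finset.prod_fiberwise_of_maps_to (fun t _ => Finset.mem_univ (a t))
      (fun t => φ (zv (a t)))]
    refine Finset.prod_congr rfl (fun i _ => ?_)
    rw [Finset.prod_congr rfl (fun t ht => ?_), Finset.prod_const]
    · rfl
    · simp only [Finset.mem_filter] at ht
      rw [ht.2]
  calc ∫ ω : (Fin K → Z) × (Fin N → V),
        Real.exp (s * ((N : ℝ) * u - ∑ t, f (ω.1 (a t), ω.2 t)))
        ∂((Measure.pi fun _ : Fin K => D).prod (Measure.pi fun _ : Fin N => G))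
      = ∫ ω : (Fin K → Z) × (Fin N → V), Real.exp (s * ((N : ℝ) * u))
          * ∏ t, Real.exp (-(s * f (ω.1 (a t), ω.2 t)))
          ∂((Measure.pi fun _ : Fin K => D).prod (Measure.pi fun _ : Fin N => G)) :=
        integral_congr_ae (Filter.Eventually.of_forall hrw)
    _ = Real.exp (s * ((N : ℝ) * u)) * ∫ ω : (Fin K → Z) × (Fin N → V),
          ∏ t, Real.exp (-(s * f (ω.1 (a t), ω.2 t)))
          ∂((Measure.pi fun _ : Fin K => D).prod (Measure.pi fun _ : Fin N => G)) :=
        integral_const_mul _ _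
    _ = Real.exp (s * ((N : ℝ) * u))
        * ∏ i : Fin K, ∫ z, φ z ^ (nCount a i) ∂D := by
        rw [integral_prod _ hintP]
        congr 1
        calc ∫ zv : Fin K → Z, (∫ w : Fin N → V,
              ∏ t, Real.exp (-(s * f (zv (a t), w t)))
              ∂(Measure.pi fun _ : Fin N => G)) ∂(Measure.pi fun _ : Fin K => D)
            = ∫ zv : Fin K → Z, ∏ i : Fin K, φ (zv i) ^ (nCount a i)
              ∂(Measure.pi fun _ : Fin K => D) := by
              refine integral_congr_ae (Filter.Eventually.of_forall fun zv => ?_)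
              show (∫ w : Fin N → V, ∏ t : Fin N, Real.exp (-(s * f (zv (a t), w t)))
                  ∂(Measure.pi fun _ : Fin N => G))
                = ∏ i : Fin K, φ (zv i) ^ (nCount a i)
              rw [integral_pi_prod G (fun (t : Fin N) v =>
                Real.exp (-(s * f (zv (a t), v)))), ← hgroup zv]
          _ = ∏ i : Fin K, ∫ z, φ z ^ (nCount a i) ∂D :=
              integral_pi_prod D (fun (i : Fin K) z => φ z ^ (nCount a i))

end Setting


private lemma halg1 : ∀ B T Vv Dd : ℝ, Dd ≠ 0 → Dd = Vv + B * T / 3 →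
    1 - (T / Dd) * B / 3 = Vv / Dd := by
  intro B T Vv Dd hDd hEq
  have hVv : Vv = Dd - B * T / 3 := by rw [hEq]; ring
  rw [hVv, sub_div, div_self hDd]
  have h6 : (T / Dd) * B / 3 = B * T / 3 / Dd := by ring
  rw [h6]

private lemma halg2 : ∀ T Vv Dd : ℝ, Dd ≠ 0 → Vv ≠ 0 →
    -(T / Dd) * T + (T / Dd) ^ 2 * Vv / (2 * (Vv / Dd)) = -(T ^ 2) / (2 * Dd) := by
  intro T Vv Dd hDd hVv
  field_simp
  ring

private lemma halg3 : ∀ w ai ss nm c e n : ℝ, n ≠ 0 →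
    2 * (w + (ss / n) * ai) + 2 * nm * c * e / 3
      = 2 * ((n * w + ss * ai) + (nm * c) * (n * e) / 3) / n := by
  intro w ai ss nm c e n hn
  field_simp

private lemma halg4 : ∀ n e Dd : ℝ, n ≠ 0 → Dd ≠ 0 →
    -(n * e ^ 2) / (2 * Dd / n) = -((n * e) ^ 2) / (2 * Dd) := by
  intro n e Dd hn hDd
  field_simp

theorem estimator_concentration
    {Z V : Type*} [MeasurableSpace Z] [MeasurableSpace V]
    (D : Measure Z) (G : Measure V)
    [IsProbabilityMeasure D] [IsProbabilityMeasure G]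
    (L U : ℝ) (hLU : L ≤ U)
    (f : Z × V → ℝ) (hf : Measurable f)
    (hbdd : ∀ z v, f (z, v) ∈ Set.Icc L U)
    (K N : ℕ) (hN : 1 ≤ N)
    (a : Fin N → Fin K)
    (ε : ℝ) (hε : 0 < ε) :
    (sampleMeasure D G K N
        {ω : (Fin K → Z) × (Fin N → V) |
          ε ≤ truePerf D G f - (1 / (N : ℝ)) * ∑ t : Fin N, f (ω.1 (a t), ω.2 t)}).toReal
    ≤ Real.exp (-((N : ℝ) * ε ^ 2) /
        (2 * (sigma2WI D G f
              + ((∑ i : Fin K, (nCount a i : ℝ) ^ 2) / (N : ℝ)) * sigma2AI D G f)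
          + 2 * ((Finset.univ.sup (nCount a) : ℕ) : ℝ) * (U - L) * ε / 3)) := by
  classical
  haveI : IsProbabilityMeasure (sampleMeasure D G K N) := by
    unfold sampleMeasure; infer_instance
  set u := truePerf D G f with hu
  set σWI := sigma2WI D G f with hσWI
  set σAI := sigma2AI D G f with hσAI
  set C := U - L with hC
  set M := max |L| |U| with hM
  have hNR : (0 : ℝ) < N := by exact_mod_cast hN
  set b : ℝ := ((Finset.univ.sup (nCount a) : ℕ) : ℝ) * C with hb
  have hC0 : 0 ≤ C := by rw [hC]; linarith
  have hb0 : 0 ≤ b := mul_nonneg (Nat.cast_nonneg _) hC0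
  set t0 : ℝ := N * ε with ht0
  have ht0pos : 0 < t0 := mul_pos hNR hε
  set vv : ℝ := N * σWI + (∑ i : Fin K, (nCount a i : ℝ) ^ 2) * σAI with hvv
  set Vi : Fin K → ℝ := fun i => (nCount a i : ℝ) * σWI + (nCount a i : ℝ) ^ 2 * σAI
    with hVi
  have hSumN : ∑ i : Fin K, nCount a i = N := by
    have := Finset.card_eq_sum_card_fiberwise
      (f := a) (s := (Finset.univ : Finset (Fin N))) (t := (Finset.univ : Finset (Fin K)))
      (fun t _ => Finset.mem_univ (a t))
    simpa [nCount] using this.symm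
  have hSumNR : ∑ i : Fin K, (nCount a i : ℝ) = N := by
    exact_mod_cast congrArg (Nat.cast : ℕ → ℝ) hSumN
  have hSumVi : ∑ i : Fin K, Vi i = vv := by
    rw [hvv, hVi, Finset.sum_add_distrib, ← Finset.sum_mul, ← Finset.sum_mul, hSumNR]
  have hViEq : ∀ i : Fin K, Vi i
      = ∫ ω : Z × (Fin (nCount a i) → V),
          ((nCount a i : ℝ) * u - ∑ j, f (ω.1, ω.2 j)) ^ 2
          ∂(D.prod (Measure.pi fun _ : Fin (nCount a i) => G)) := fun i =>
    (integral_Y_sq_eq D G hf hbdd (nCount a i)).symm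
  have hVi0 : ∀ i : Fin K, 0 ≤ Vi i := fun i => by
    rw [hViEq i]; exact integral_nonneg fun ω => sq_nonneg _
  have hvv0 : 0 ≤ vv := hSumVi ▸ Finset.sum_nonneg fun i _ => hVi0 i
  set X : (Fin K → Z) × (Fin N → V) → ℝ :=
    fun ω => (N : ℝ) * u - ∑ t, f (ω.1 (a t), ω.2 t) with hX
  have hXmeas : Measurable X :=
    measurable_const.sub (Finset.measurable_sum _ fun t _ =>
      hf.comp (((measurable_pi_apply (a t)).comp measurable_fst).prodMk
        ((measurable_pi_apply t).comp measurable_snd)))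
  have habsf : ∀ z v, |f (z, v)| ≤ M := fun z v => abs_le_of_Icc (hbdd z v)
  have huM : |u| ≤ M := abs_le_of_Icc (truePerf_mem D G hf hbdd)
  have hXbdd : ∀ ω, |X ω| ≤ 2 * N * M := by
    intro ω
    have h1 : |∑ t, f (ω.1 (a t), ω.2 t)| ≤ N * M := by
      calc |∑ t, f (ω.1 (a t), ω.2 t)| ≤ ∑ t, |f (ω.1 (a t), ω.2 t)| :=
          Finset.abs_sum_le_sum_abs _ _
        _ ≤ ∑ _t : Fin N, M := Finset.sum_le_sum fun t _ => habsf _ _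
        _ = N * M := by simp [mul_comm]
    have h2 : |(N : ℝ) * u| ≤ N * M := by
      rw [abs_mul, Nat.abs_cast]
      exact mul_le_mul_of_nonneg_left huM (Nat.cast_nonneg N)
    calc |X ω| ≤ |(N : ℝ) * u| + |∑ t, f (ω.1 (a t), ω.2 t)| := abs_sub _ _
      _ ≤ 2 * N * M := by linarith
  have hXint : ∀ s : ℝ, Integrable (fun ω => Real.exp (s * X ω))
      (sampleMeasure D G K N) := by
    intro s
    refine integrable_of_bdd ((Real.measurable_exp.comp
      (hXmeas.const_mul s)).aestronglyMeasurable) (c := Real.exp (|s| * (2 * N * M)))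
      (fun ω => ?_)
    rw [abs_of_nonneg (Real.exp_pos _).le]
    apply Real.exp_le_exp.mpr
    calc s * X ω ≤ |s * X ω| := le_abs_self _
      _ = |s| * |X ω| := abs_mul _ _
      _ ≤ |s| * (2 * N * M) := mul_le_mul_of_nonneg_left (hXbdd ω) (abs_nonneg s)
  have hset : {ω : (Fin K → Z) × (Fin N → V) |
      ε ≤ u - (1 / (N : ℝ)) * ∑ t : Fin N, f (ω.1 (a t), ω.2 t)}
      = {ω : (Fin K → Z) × (Fin N → V) | t0 ≤ X ω} := by
    ext ω
    simp only [Set.mem_setOf_eq, hX, ht0]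
    constructor
    · intro h
      have h2 := mul_le_mul_of_nonneg_left h hNR.le
      have h3 : (N : ℝ) * (u - (1 / N) * ∑ t, f (ω.1 (a t), ω.2 t))
          = (N : ℝ) * u - ∑ t, f (ω.1 (a t), ω.2 t) := by
        field_simp
        try ring
      linarith [h3 ▸ h2]
    · intro h
      have h2 := mul_le_mul_of_nonneg_left h (le_of_lt (inv_pos.mpr hNR))
      have h3 : ((N : ℝ))⁻¹ * ((N : ℝ) * u - ∑ t, f (ω.1 (a t), ω.2 t))
          = u - (1 / N) * ∑ t, f (ω.1 (a t), ω.2 t) := by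
        field_simp
        try ring
      have h4 : ((N : ℝ))⁻¹ * ((N : ℝ) * ε) = ε := by
        field_simp
      linarith [h3 ▸ h2, h4 ▸ h2]
  rw [hset]
  have hYmeas : ∀ i : Fin K, Measurable (fun ω : Z × (Fin (nCount a i) → V) =>
      (nCount a i : ℝ) * u - ∑ j, f (ω.1, ω.2 j)) := fun i =>
    measurable_const.sub (Finset.measurable_sum _ fun j _ => meas_coord hf j)
  have huIcc := truePerf_mem D G hf hbdd
  have hYb : ∀ (i : Fin K) (ω : Z × (Fin (nCount a i) → V)),
      |(nCount a i : ℝ) * u - ∑ j, f (ω.1, ω.2 j)| ≤ b := by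
    intro i ω
    have hni : ((nCount a i : ℕ) : ℝ) ≤ ((Finset.univ.sup (nCount a) : ℕ) : ℝ) :=
      Nat.cast_le.mpr (Finset.le_sup (f := nCount a) (Finset.mem_univ i))
    have hniC : ((nCount a i : ℕ) : ℝ) * C ≤ b := by
      rw [hb]; exact mul_le_mul_of_nonneg_right hni hC0
    have hS1 : ∑ j, f (ω.1, ω.2 j) ≤ ((nCount a i : ℕ) : ℝ) * U := by
      calc ∑ j, f (ω.1, ω.2 j) ≤ ∑ _j : Fin (nCount a i), U :=
          Finset.sum_le_sum fun j _ => (hbdd _ _).2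
        _ = ((nCount a i : ℕ) : ℝ) * U := by simp [mul_comm]
    have hS2 : ((nCount a i : ℕ) : ℝ) * L ≤ ∑ j, f (ω.1, ω.2 j) := by
      calc ((nCount a i : ℕ) : ℝ) * L = ∑ _j : Fin (nCount a i), L := by
            simp [mul_comm]
        _ ≤ ∑ j, f (ω.1, ω.2 j) := Finset.sum_le_sum fun j _ => (hbdd _ _).1
    have hm0 : (0:ℝ) ≤ ((nCount a i : ℕ) : ℝ) := Nat.cast_nonneg _
    have hmu1 : ((nCount a i : ℕ) : ℝ) * u ≤ ((nCount a i : ℕ) : ℝ) * U :=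
      mul_le_mul_of_nonneg_left huIcc.2 hm0
    have hmu2 : ((nCount a i : ℕ) : ℝ) * L ≤ ((nCount a i : ℕ) : ℝ) * u :=
      mul_le_mul_of_nonneg_left huIcc.1 hm0
    have hdist : ((nCount a i : ℕ) : ℝ) * C
        = ((nCount a i : ℕ) : ℝ) * U - ((nCount a i : ℕ) : ℝ) * L := by
      rw [hC]; ring
    rw [abs_le]
    constructor
    · linarith
    · linarith
  have key : ∀ s : ℝ, 0 ≤ s →
      (sampleMeasure D G K N {ω | t0 ≤ X ω}).toReal
        ≤ Real.exp (-s * t0) * ∏ i : Fin K,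
            ∫ ω : Z × (Fin (nCount a i) → V),
              Real.exp (s * ((nCount a i : ℝ) * u - ∑ j, f (ω.1, ω.2 j)))
              ∂(D.prod (Measure.pi fun _ : Fin (nCount a i) => G)) := by
    intro s hs
    have hch := ProbabilityTheory.measure_ge_le_exp_mul_mgf (X := X)
      (μ := sampleMeasure D G K N) (t := s) t0 hs (hXint s)
    refine hch.trans (le_of_eq ?_)
    congr 1
    have hmgf : ProbabilityTheory.mgf X (sampleMeasure D G K N) s
        = ∫ ω, Real.exp (s * X ω) ∂(sampleMeasure D G K N) := rfl
    rw [hmgf]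
    have h1 : ∫ ω, Real.exp (s * X ω) ∂(sampleMeasure D G K N)
        = Real.exp (s * ((N : ℝ) * u)) * ∏ i : Fin K,
            ∫ z, (∫ v, Real.exp (-(s * f (z, v))) ∂G) ^ (nCount a i) ∂D :=
      mgf_total D G hf hbdd K N a s
    rw [h1]
    have h2 : Real.exp (s * ((N : ℝ) * u))
        = ∏ i : Fin K, Real.exp (s * ((nCount a i : ℝ) * u)) := by
      rw [← Real.exp_sum]
      congr 1
      have h3 : ∀ i : Fin K, s * ((nCount a i : ℝ) * u)
          = (s * u) * (nCount a i : ℝ) := by intro i; ring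
      rw [Finset.sum_congr rfl (fun i _ => h3 i), ← Finset.mul_sum, hSumNR]
      ring
    rw [h2, ← Finset.prod_mul_distrib]
    exact Finset.prod_congr rfl fun i _ => (mgf_m D G hf hbdd (nCount a i) s).symm
  have hmgf_nonneg : ∀ (i : Fin K) (s : ℝ),
      0 ≤ ∫ ω : Z × (Fin (nCount a i) → V),
          Real.exp (s * ((nCount a i : ℝ) * u - ∑ j, f (ω.1, ω.2 j)))
          ∂(D.prod (Measure.pi fun _ : Fin (nCount a i) => G)) := fun i s =>
    integral_nonneg fun ω => (Real.exp_pos _).le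
  rcases eq_or_lt_of_le hvv0 with hv0 | hvpos
  · -- degenerate case: total variance is zero
    have hViz : ∀ i : Fin K, Vi i = 0 := by
      intro i
      have hsum0 : ∑ i : Fin K, Vi i = 0 := hSumVi.trans hv0.symm
      exact (Finset.sum_eq_zero_iff_of_nonneg (fun j _ => hVi0 j)).mp hsum0 i
        (Finset.mem_univ i)
    have hmgf1 : ∀ (i : Fin K) (s : ℝ),
        (∫ ω : Z × (Fin (nCount a i) → V),
          Real.exp (s * ((nCount a i : ℝ) * u - ∑ j, f (ω.1, ω.2 j)))
          ∂(D.prod (Measure.pi fun _ : Fin (nCount a i) => G))) = 1 := by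
      intro i s
      set μi := D.prod (Measure.pi fun _ : Fin (nCount a i) => G) with hμi
      set Y : Z × (Fin (nCount a i) → V) → ℝ :=
        fun ω => (nCount a i : ℝ) * u - ∑ j, f (ω.1, ω.2 j) with hY'
      have hY20 : ∫ ω, (Y ω) ^ 2 ∂μi = 0 := ((hViEq i).symm).trans (hViz i)
      have hae : (fun ω => (Y ω) ^ 2) =ᵐ[μi] 0 := by
        rw [← integral_eq_zero_iff_of_nonneg (fun ω => sq_nonneg (Y ω))
          (integrable_Y_sq_m D G hf hbdd (nCount a i))]
        exact hY20
      have haeY : Y =ᵐ[μi] 0 := by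
        filter_upwards [hae] with ω hω
        have h5 : (Y ω) ^ 2 = 0 := hω
        exact pow_eq_zero_iff (two_ne_zero) |>.mp h5
      have hone : (fun ω => Real.exp (s * Y ω)) =ᵐ[μi] fun _ => 1 := by
        filter_upwards [haeY] with ω hω
        rw [hω]
        simp
      rw [integral_congr_ae hone]
      simp [measure_univ]
    have hkey2 : ∀ s : ℝ, 0 ≤ s →
        (sampleMeasure D G K N {ω | t0 ≤ X ω}).toReal ≤ Real.exp (-s * t0) := by
      intro s hs
      have hk := key s hs
      rw [Finset.prod_congr rfl (fun i _ => hmgf1 i s), Finset.prod_const_one,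
        mul_one] at hk
      exact hk
    have hP0 : (sampleMeasure D G K N {ω | t0 ≤ X ω}).toReal ≤ 0 := by
      by_contra hpos
      push_neg at hpos
      set P := (sampleMeasure D G K N {ω | t0 ≤ X ω}).toReal with hP
      obtain ⟨s, hs'⟩ : ∃ s : ℝ, s = (1 - Real.log P) / t0 := ⟨_, rfl⟩
      have hP1 : P ≤ 1 := by
        rw [hP]
        have h1 : sampleMeasure D G K N {ω | t0 ≤ X ω} ≤ 1 := by
          rw [← measure_univ (μ := sampleMeasure D G K N)]
          exact measure_mono (Set.subset_univ _)
        exact ENNReal.toReal_le_of_le_ofReal zero_le_one (by simpa using h1)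
      have hlogP : Real.log P ≤ 0 := Real.log_nonpos hpos.le hP1
      have hs0 : 0 ≤ s := by
        rw [hs']
        apply div_nonneg _ ht0pos.le
        linarith
      have hb1 := hkey2 s hs0
      have he : -s * t0 = Real.log P - 1 := by
        rw [hs']
        field_simp
        ring
      rw [he, Real.exp_sub, Real.exp_log hpos] at hb1
      have hlt : P / Real.exp 1 < P := by
        rw [div_lt_iff₀ (Real.exp_pos 1)]
        nlinarith [Real.exp_one_gt_d9, hpos]
      linarith
    calc (sampleMeasure D G K N {ω | t0 ≤ X ω}).toReal ≤ 0 := hP0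
      _ ≤ _ := (Real.exp_pos _).le
  · -- main case: positive variance
    obtain ⟨d, hd'⟩ : ∃ d : ℝ, d = vv + b * t0 / 3 := ⟨_, rfl⟩
    have hd : 0 < d := by
      rw [hd']
      have h' : 0 ≤ b * t0 / 3 := by positivity
      linarith
    obtain ⟨s, hs'⟩ : ∃ s : ℝ, s = t0 / d := ⟨_, rfl⟩
    have hs0 : 0 ≤ s := by rw [hs']; exact div_nonneg ht0pos.le hd.le
    have hsb : s * b < 3 := by
      rw [hs', div_mul_eq_mul_div, div_lt_iff₀ hd]
      have h1 : 3 * d = 3 * vv + b * t0 := by rw [hd']; ring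
      nlinarith [mul_nonneg ht0pos.le hb0]
    have hperi : ∀ i : Fin K,
        (∫ ω : Z × (Fin (nCount a i) → V),
          Real.exp (s * ((nCount a i : ℝ) * u - ∑ j, f (ω.1, ω.2 j)))
          ∂(D.prod (Measure.pi fun _ : Fin (nCount a i) => G)))
        ≤ Real.exp (s ^ 2 * Vi i / (2 * (1 - s * b / 3))) := by
      intro i
      have hbnd := mgf_bound (D.prod (Measure.pi fun _ : Fin (nCount a i) => G))
        (fun ω => (nCount a i : ℝ) * u - ∑ j, f (ω.1, ω.2 j))
        (hYmeas i) hb0 (hYb i) (integral_Y_eq D G hf hbdd (nCount a i)) hs0 hsb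
      beta_reduce at hbnd
      rw [← hViEq i] at hbnd
      exact hbnd
    have hfinal := key s hs0
    have hprod : (∏ i : Fin K,
        ∫ ω : Z × (Fin (nCount a i) → V),
          Real.exp (s * ((nCount a i : ℝ) * u - ∑ j, f (ω.1, ω.2 j)))
          ∂(D.prod (Measure.pi fun _ : Fin (nCount a i) => G)))
        ≤ ∏ i : Fin K, Real.exp (s ^ 2 * Vi i / (2 * (1 - s * b / 3))) :=
      Finset.prod_le_prod (fun i _ => hmgf_nonneg i s) (fun i _ => hperi i)
    have hexp_prod : (∏ i : Fin K, Real.exp (s ^ 2 * Vi i / (2 * (1 - s * b / 3))))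
        = Real.exp (s ^ 2 * vv / (2 * (1 - s * b / 3))) := by
      rw [← Real.exp_sum]
      congr 1
      rw [← Finset.sum_div, ← Finset.mul_sum, hSumVi]
    have hchain : (sampleMeasure D G K N {ω | t0 ≤ X ω}).toReal
        ≤ Real.exp (-s * t0) * Real.exp (s ^ 2 * vv / (2 * (1 - s * b / 3))) := by
      refine hfinal.trans ?_
      rw [← hexp_prod]
      exact mul_le_mul_of_nonneg_left hprod (Real.exp_pos _).le
    rw [← Real.exp_add] at hchain
    refine hchain.trans (le_of_eq ?_)
    congr 1
    have hvvne : vv ≠ 0 := ne_of_gt hvpos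
    have h1 : 1 - s * b / 3 = vv / d := by
      rw [hs']
      exact halg1 b t0 vv d hd.ne' hd'
    have h2 : -s * t0 + s ^ 2 * vv / (2 * (vv / d)) = -(t0 ^ 2) / (2 * d) := by
      rw [hs']
      exact halg2 t0 vv d hd.ne' hvvne
    have h3 : 2 * (σWI + ((∑ i : Fin K, (nCount a i : ℝ) ^ 2) / (N : ℝ)) * σAI)
        + 2 * ((Finset.univ.sup (nCount a) : ℕ) : ℝ) * C * ε / 3 = 2 * d / N := by
      rw [hd', hvv, hb, ht0]
      exact halg3 σWI σAI (∑ i : Fin K, (nCount a i : ℝ) ^ 2)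
        ((Finset.univ.sup (nCount a) : ℕ) : ℝ) C ε N hNR.ne'
    have h4 : -((N : ℝ) * ε ^ 2) / (2 * d / N) = -(t0 ^ 2) / (2 * d) := by
      rw [ht0]
      exact halg4 N ε d hNR.ne' hd.ne'
    rw [h1, h2, h3, h4]
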